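/- Let a₁, …, a_{d+2} be distinct complex numbers and set c_α = ∏_{ρ≠α}(a_α − a_ρ)⁻¹ for α = 1, …, d+2. Define φ : M(r,d) → M_r(ℂ)^{d+2} by φ(A(x)) = (c₁A(a₁), …, c_{d+2}A(a_{d+2})). Then φ is injective, and a tuple (Y₁, …, Y_{d+2}) ∈ M_r(ℂ)^{d+2} lies in the image of φ if and only if the following linear conditions hold: Σ_{α=1}^{d+2} (Y_α)_{11} = 0; Σ_{α=1}^{d+2} (Y_α)_{j1} = 0 and Σ_{α=1}^{d+2} a_α (Y_α)_{j1} = 0 for all 2 ≤ j ≤ r; and Σ_{α=1}^{d+2} (Y_α)_{ji} = 0 for all 2 ≤ i, j ≤ r. -/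
import Mathlib


open Polynomial Matrix

noncomputable section

/-- The space `M(r,d)` of polynomial matrices, with `r = n+2`. -/
def Mrd (n d : ℕ) (A : Matrix (Fin (n+2)) (Fin (n+2)) (Polynomial ℂ)) : Prop :=
  (A 0 0).degree ≤ (d : WithBot ℕ) ∧
  (∀ j : Fin (n+1), (A 0 j.succ).degree ≤ ((d+1 : ℕ) : WithBot ℕ)) ∧
  (∀ i : Fin (n+1), (A i.succ 0).degree ≤ ((d-1 : ℕ) : WithBot ℕ)) ∧
  (∀ i j : Fin (n+1), (A i.succ j.succ).degree ≤ (d : WithBot ℕ))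

/-- The group `G_r`, `r = n+2`: block form `[[1, ᵗb₁x + ᵗb₀],[0, B]]` with `B ∈ GL_{r-1}(ℂ)`. -/
def Gr (n : ℕ) (g : Matrix (Fin (n+2)) (Fin (n+2)) (Polynomial ℂ)) : Prop :=
  g 0 0 = 1 ∧
  (∀ i : Fin (n+1), g i.succ 0 = 0) ∧
  (∀ j : Fin (n+1), (g 0 j.succ).degree ≤ 1) ∧
  (∀ i j : Fin (n+1), (g i.succ j.succ).degree ≤ 0) ∧
  IsUnit g.det

/-- The block `u(x)` of `A(x)`. -/
def blkU (n : ℕ) (A : Matrix (Fin (n+2)) (Fin (n+2)) (Polynomial ℂ)) :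
    Fin (n+1) → Polynomial ℂ := fun i => A i.succ 0

/-- The block `T(x)` of `A(x)`. -/
def blkT (n : ℕ) (A : Matrix (Fin (n+2)) (Fin (n+2)) (Polynomial ℂ)) :
    Matrix (Fin (n+1)) (Fin (n+1)) (Polynomial ℂ) := Matrix.of fun i j => A i.succ j.succ

/-- `D(A(x); x) = (u(x), T(x)u(x), …, T(x)^{r−2}u(x))`. -/
def Dmat (n : ℕ) (A : Matrix (Fin (n+2)) (Fin (n+2)) (Polynomial ℂ)) :
    Matrix (Fin (n+1)) (Fin (n+1)) (Polynomial ℂ) :=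
  Matrix.of fun i j => ((blkT n A ^ (j : ℕ)) *ᵥ blkU n A) i

/-- `D(A(x); c)`, evaluation at `x = c`. -/
def Dc (n : ℕ) (A : Matrix (Fin (n+2)) (Fin (n+2)) (Polynomial ℂ)) (c : ℂ) :
    Matrix (Fin (n+1)) (Fin (n+1)) ℂ :=
  (Dmat n A).map (eval c)

/-- The lower shift matrix `τ`. -/
def tauMat (n : ℕ) : Matrix (Fin (n+1)) (Fin (n+1)) ℂ :=
  Matrix.of fun i j => if (i : ℕ) = (j : ℕ) + 1 then 1 else 0

/-- The vector `ν = ᵗ(1,0,…,0)`. -/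
def nuVec (n : ℕ) : Fin (n+1) → ℂ := fun i => if (i : ℕ) = 0 then 1 else 0



namespace Stmt12Aux

variable {d : ℕ}

def N (a : Fin (d+2) → ℂ) (α : Fin (d+2)) : Polynomial ℂ :=
  ∏ ρ ∈ Finset.univ.erase α, (X - C (a ρ))

def w (a : Fin (d+2) → ℂ) (α : Fin (d+2)) : ℂ :=
  ∏ ρ ∈ Finset.univ.erase α, (a α - a ρ)

def L (a : Fin (d+2) → ℂ) (y : Fin (d+2) → ℂ) : Polynomial ℂ :=
  ∑ α, y α • N a α

lemma w_ne_zero {a : Fin (d+2) → ℂ} (ha : Function.Injective a) (α : Fin (d+2)) :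
    w a α ≠ 0 := by
  refine Finset.prod_ne_zero_iff.mpr fun ρ hρ => sub_ne_zero.mpr fun h => ?_
  exact (Finset.mem_erase.mp hρ).1 (ha h).symm

lemma monic_N (a : Fin (d+2) → ℂ) (α : Fin (d+2)) : (N a α).Monic :=
  monic_prod_of_monic _ _ fun _ _ => monic_X_sub_C _

lemma natDegree_N (a : Fin (d+2) → ℂ) (α : Fin (d+2)) : (N a α).natDegree = d + 1 := by
  rw [N, natDegree_prod_of_monic _ _ fun _ _ => monic_X_sub_C _]
  simp [Finset.card_erase_of_mem]

lemma degree_N (a : Fin (d+2) → ℂ) (α : Fin (d+2)) :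
    (N a α).degree = ((d + 1 : ℕ) : WithBot ℕ) := by
  rw [degree_eq_natDegree (monic_N a α).ne_zero, natDegree_N]

lemma coeff_N_top (a : Fin (d+2) → ℂ) (α : Fin (d+2)) : (N a α).coeff (d+1) = 1 := by
  have := (monic_N a α).coeff_natDegree
  rwa [natDegree_N] at this

lemma coeff_N_next (a : Fin (d+2) → ℂ) (α : Fin (d+2)) :
    (N a α).coeff d = -∑ ρ ∈ Finset.univ.erase α, a ρ := by
  have h := prod_X_sub_C_nextCoeff (s := Finset.univ.erase α) a
  rw [nextCoeff] at h
  rw [← N] at h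
  rw [natDegree_N] at h
  simpa using h

lemma eval_N_self (a : Fin (d+2) → ℂ) (α : Fin (d+2)) : eval (a α) (N a α) = w a α := by
  simp [N, w, eval_prod]

lemma eval_N_ne (a : Fin (d+2) → ℂ) {α β : Fin (d+2)} (h : β ≠ α) :
    eval (a β) (N a α) = 0 := by
  rw [N, eval_prod]
  exact Finset.prod_eq_zero (Finset.mem_erase.mpr ⟨h, Finset.mem_univ _⟩) (by simp)

lemma degree_L (a y : Fin (d+2) → ℂ) : (L a y).degree ≤ ((d + 1 : ℕ) : WithBot ℕ) := by
  refine (degree_sum_le _ _).trans ?_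
  refine Finset.sup_le fun α _ => ?_
  exact (degree_smul_le _ _).trans (degree_N a α).le

lemma coeff_L (a y : Fin (d+2) → ℂ) (k : ℕ) :
    (L a y).coeff k = ∑ α, y α * (N a α).coeff k := by
  simp [L, finset_sum_coeff, coeff_smul, smul_eq_mul]

lemma coeff_L_top (a y : Fin (d+2) → ℂ) : (L a y).coeff (d+1) = ∑ α, y α := by
  simp [coeff_L, coeff_N_top]

lemma coeff_L_next (a y : Fin (d+2) → ℂ) :
    (L a y).coeff d = (∑ α, a α * y α) - (∑ α, a α) * ∑ α, y α := by
  rw [coeff_L]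
  have : ∀ α : Fin (d+2), (∑ ρ ∈ Finset.univ.erase α, a ρ) = (∑ ρ, a ρ) - a α := by
    intro α
    rw [eq_sub_iff_add_eq, Finset.sum_erase_add _ _ (Finset.mem_univ α)]
  simp only [coeff_N_next, this]
  rw [Finset.mul_sum, ← Finset.sum_sub_distrib]
  exact Finset.sum_congr rfl fun x _ => by ring

lemma eval_L (a : Fin (d+2) → ℂ) (y : Fin (d+2) → ℂ) (α : Fin (d+2)) :
    eval (a α) (L a y) = y α * w a α := by
  rw [L, eval_finset_sum]
  rw [Finset.sum_eq_single α]
  · simp [eval_N_self]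
  · intro β _ hβ
    simp [eval_N_ne a hβ.symm]
  · simp

lemma eq_of_eval {a : Fin (d+2) → ℂ} (ha : Function.Injective a) {p q : Polynomial ℂ}
    (hp : p.degree ≤ ((d + 1 : ℕ) : WithBot ℕ)) (hq : q.degree ≤ ((d + 1 : ℕ) : WithBot ℕ))
    (h : ∀ α, eval (a α) p = eval (a α) q) : p = q := by
  have hz : p - q = 0 := by
    rcases eq_or_ne (p - q) 0 with h0 | h0
    · exact h0
    refine eq_zero_of_natDegree_lt_card_of_eval_eq_zero _ ha (fun α => by simp [h α]) ?_
    have : (p - q).degree ≤ ((d + 1 : ℕ) : WithBot ℕ) := (degree_sub_le _ _).trans (max_le hp hq)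
    have := natDegree_le_iff_degree_le.mpr this
    simpa [Fintype.card_fin] using lt_of_le_of_lt this (by omega)
  exact sub_eq_zero.mp hz

lemma degree_step {p : Polynomial ℂ} {m : ℕ}
    (h1 : p.degree ≤ ((m + 1 : ℕ) : WithBot ℕ)) (h2 : p.coeff (m+1) = 0) :
    p.degree ≤ (m : WithBot ℕ) := by
  rw [degree_le_iff_coeff_zero] at h1 ⊢
  intro k hk
  have hk' : m < k := by exact_mod_cast hk
  rcases eq_or_lt_of_le (Nat.succ_le_of_lt hk') with h | h
  · rw [← h]; exact h2
  · exact h1 k (by exact_mod_cast h)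

/-- any polynomial of degree ≤ d+1 is the Lagrange interpolant of its scaled values -/
lemma eq_L {a : Fin (d+2) → ℂ} (ha : Function.Injective a) {p : Polynomial ℂ}
    (hp : p.degree ≤ ((d + 1 : ℕ) : WithBot ℕ)) :
    p = L a fun α => (w a α)⁻¹ * eval (a α) p := by
  refine eq_of_eval ha hp (degree_L a _) fun α => ?_
  rw [eval_L]
  field_simp [w_ne_zero ha α]

end Stmt12Aux

namespace Stmt12Aux

lemma sum_eq_zero_of_degree_le {d : ℕ} {a : Fin (d+2) → ℂ} (ha : Function.Injective a)
    {p : Polynomial ℂ} (hp : p.degree ≤ (d : WithBot ℕ)) :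
    ∑ α, (w a α)⁻¹ * eval (a α) p = 0 := by
  have hp1 : p.degree ≤ ((d + 1 : ℕ) : WithBot ℕ) :=
    hp.trans (by exact_mod_cast Nat.cast_le.mpr (Nat.le_succ d))
  have hL := eq_L ha hp1
  have : (∑ α, (w a α)⁻¹ * eval (a α) p) = p.coeff (d+1) := by
    conv_rhs => rw [hL]
    rw [coeff_L_top]
  rw [this]
  exact coeff_eq_zero_of_degree_lt (hp.trans_lt (by exact_mod_cast Nat.lt_succ_self d))

lemma sum_mul_eq_zero_of_degree_le {d : ℕ} {a : Fin (d+2) → ℂ} (ha : Function.Injective a)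
    (hd : 1 ≤ d) {p : Polynomial ℂ} (hp : p.degree ≤ ((d - 1 : ℕ) : WithBot ℕ)) :
    ∑ α, a α * ((w a α)⁻¹ * eval (a α) p) = 0 := by
  have hpd : p.degree ≤ (d : WithBot ℕ) :=
    hp.trans (by exact_mod_cast Nat.cast_le.mpr (Nat.sub_le d 1))
  have hsum : ∑ α, (w a α)⁻¹ * eval (a α) p = 0 := sum_eq_zero_of_degree_le ha hpd
  have hp1 : p.degree ≤ ((d + 1 : ℕ) : WithBot ℕ) :=
    hpd.trans (by exact_mod_cast Nat.cast_le.mpr (Nat.le_succ d))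
  have hL := eq_L ha hp1
  have hc : p.coeff d = (∑ α, a α * ((w a α)⁻¹ * eval (a α) p)) -
      (∑ α, a α) * ∑ α, (w a α)⁻¹ * eval (a α) p := by
    conv_lhs => rw [hL]
    exact coeff_L_next a _
  have hc0 : p.coeff d = 0 :=
    coeff_eq_zero_of_degree_lt (hp.trans_lt (by exact_mod_cast Nat.sub_lt hd Nat.one_pos))
  rw [hc0, hsum, mul_zero, sub_zero] at hc
  exact hc.symm

end Stmt12Aux


open Stmt12Aux in
/-- for distinct `a₁, …, a_{d+2}` and `c_α = ∏_{ρ≠α}(a_α − a_ρ)⁻¹`, the map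
`φ(A(x)) = (c₁A(a₁), …, c_{d+2}A(a_{d+2}))` is injective on `M(r,d)`, and its image is
cut out by the stated linear conditions. -/
theorem stmt12 (n d : ℕ) (hd : 1 ≤ d)
    (a : Fin (d+2) → ℂ) (ha : Function.Injective a) :
    (∀ A B : Matrix (Fin (n+2)) (Fin (n+2)) (Polynomial ℂ), Mrd n d A → Mrd n d B →
      (fun α => (∏ ρ ∈ Finset.univ.erase α, (a α - a ρ))⁻¹ • A.map (eval (a α))) =
      (fun α => (∏ ρ ∈ Finset.univ.erase α, (a α - a ρ))⁻¹ • B.map (eval (a α))) →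
      A = B) ∧
    (∀ Y : Fin (d+2) → Matrix (Fin (n+2)) (Fin (n+2)) ℂ,
      (∃ A : Matrix (Fin (n+2)) (Fin (n+2)) (Polynomial ℂ), Mrd n d A ∧
        (fun α => (∏ ρ ∈ Finset.univ.erase α, (a α - a ρ))⁻¹ • A.map (eval (a α))) = Y) ↔
      ((∑ α, Y α 0 0 = 0) ∧
       (∀ j : Fin (n+1), ∑ α, Y α j.succ 0 = 0) ∧
       (∀ j : Fin (n+1), ∑ α, a α * Y α j.succ 0 = 0) ∧
       (∀ i j : Fin (n+1), ∑ α, Y α j.succ i.succ = 0))) := by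
  have hw : ∀ α, w a α ≠ 0 := w_ne_zero ha
  have degBound : ∀ (M : Matrix (Fin (n+2)) (Fin (n+2)) (Polynomial ℂ)), Mrd n d M →
      ∀ i j : Fin (n+2), (M i j).degree ≤ ((d + 1 : ℕ) : WithBot ℕ) := by
    intro M hM i j
    obtain ⟨h1, h2, h3, h4⟩ := hM
    induction i using Fin.cases with
    | zero =>
      induction j using Fin.cases with
      | zero => exact h1.trans (by exact_mod_cast Nat.le_succ d)
      | succ j => exact h2 j
    | succ i =>
      induction j using Fin.cases with
      | zero => exact (h3 i).trans (by exact_mod_cast (by omega : d - 1 ≤ d + 1))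
      | succ j => exact (h4 i j).trans (by exact_mod_cast Nat.le_succ d)
  constructor
  · intro A B hA hB hEq
    refine Matrix.ext fun i j => ?_
    refine eq_of_eval ha (degBound A hA i j) (degBound B hB i j) fun α => ?_
    have h0 := congrFun (congrFun (congrFun hEq α) i) j
    simp only [Matrix.smul_apply, Matrix.map_apply, smul_eq_mul] at h0
    exact mul_left_cancel₀ (inv_ne_zero (hw α)) h0
  · intro Y
    constructor
    · rintro ⟨A, hA, rfl⟩
      obtain ⟨h1, h2, h3, h4⟩ := hA
      refine ⟨?_, ?_, ?_, ?_⟩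
      · simp only [Matrix.smul_apply, Matrix.map_apply, smul_eq_mul]
        exact sum_eq_zero_of_degree_le ha h1
      · intro j
        simp only [Matrix.smul_apply, Matrix.map_apply, smul_eq_mul]
        exact sum_eq_zero_of_degree_le ha
          ((h3 j).trans (by exact_mod_cast Nat.sub_le d 1))
      · intro j
        simp only [Matrix.smul_apply, Matrix.map_apply, smul_eq_mul]
        exact sum_mul_eq_zero_of_degree_le ha hd (h3 j)
      · intro i j
        simp only [Matrix.smul_apply, Matrix.map_apply, smul_eq_mul]
        exact sum_eq_zero_of_degree_le ha (h4 j i)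
    · rintro ⟨h1, h2, h3, h4⟩
      have hdd : d - 1 + 1 = d := Nat.sub_add_cancel hd
      refine ⟨Matrix.of fun i j => L a fun α => Y α i j, ⟨?_, ?_, ?_, ?_⟩, ?_⟩
      · exact degree_step (degree_L a _) (by show (L a fun α => Y α 0 0).coeff (d+1) = 0; rw [coeff_L_top]; exact h1)
      · intro j
        exact degree_L a _
      · intro i
        have t1 : (L a fun α => Y α i.succ 0).degree ≤ ((d - 1 + 1 : ℕ) : WithBot ℕ) := by
          rw [hdd]
          exact degree_step (degree_L a _) (by rw [coeff_L_top]; exact h2 i)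
        refine degree_step t1 ?_
        show (L a fun α => Y α i.succ 0).coeff (d - 1 + 1) = 0
        rw [hdd, coeff_L_next, h3 i, h2 i]
        simp
      · intro i j
        exact degree_step (degree_L a _) (by show (L a fun α => Y α i.succ j.succ).coeff (d+1) = 0; rw [coeff_L_top]; exact h4 j i)
      · funext α
        ext i j
        simp only [Matrix.smul_apply, Matrix.map_apply, Matrix.of_apply, smul_eq_mul]
        have : (w a α)⁻¹ * eval (a α) (L a fun β => Y β i j) = Y α i j := by
          rw [eval_L, mul_comm (Y α i j), ← mul_assoc, inv_mul_cancel₀ (hw α), one_mul]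
        exact this
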